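/- Let (y_k)_{k≥0} be a strictly decreasing sequence of positive real numbers converging to 0, let η > 1, and assume there exists ρ ≥ 1 with (1/ρ) · y_k^η ≤ y_k − y_{k+1} ≤ ρ · y_k^η for all k ≥ 0. Then lim_{k→∞} ( 1 − ln(k·(y_k − y_{k+1}) + y_k) / ln((y_k − y_{k+1})/2) ) = (η−1)/η. -/

import Mathlib

open Filter Topology Real

lemma bern_neg {p t : ℝ} (hp : 0 < p) (ht0 : 0 < t) (ht1 : t ≤ 1) :
    1 + p * (1 - t) ≤ t ^ (-p) := by
  rcases le_or_gt p 1 with hp1 | hp1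
  · have h1 : t ^ p ≤ 1 + p * (t - 1) := by
      have := rpow_one_add_le_one_add_mul_self (s := t - 1) (by linarith) hp.le hp1
      simpa using this
    have htp : 0 < t ^ p := rpow_pos_of_pos ht0 _
    have ha : 0 ≤ p * (1 - t) := mul_nonneg hp.le (by linarith)
    rw [rpow_neg ht0.le, ← one_div, le_div_iff₀ htp]
    nlinarith [mul_le_mul_of_nonneg_left h1 (show (0:ℝ) ≤ 1 + p * (1 - t) by linarith),
      sq_nonneg (p * (1 - t))]
  · have hs : (1:ℝ) - t ≤ 1/t - 1 := by
      rw [div_sub' ht0.ne', le_div_iff₀ ht0]; nlinarith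
    have h1 : 1 + p * (1/t - 1) ≤ (1 + (1/t - 1)) ^ p :=
      one_add_mul_self_le_rpow_one_add (by linarith) hp1.le
    have h2 : (1 + (1/t - 1)) ^ p = t ^ (-p) := by
      rw [show 1 + (1/t - 1) = t⁻¹ by ring, inv_rpow ht0.le, ← rpow_neg ht0.le]
    rw [← h2]
    have : p * (1 - t) ≤ p * (1/t - 1) := by nlinarith
    linarith

lemma step_ineq {η a b : ℝ} (hη : 1 < η) (hb : 0 < b) (hba : b < a) :
    a ^ (1-η) + (η - 1) * ((a - b) / a ^ η) ≤ b ^ (1-η) := by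
  have ha : 0 < a := hb.trans hba
  set t := b / a with ht_def
  have ht0 : 0 < t := div_pos hb ha
  have ht1 : t ≤ 1 := by rw [ht_def, div_le_one ha]; linarith
  have hb1 := bern_neg (p := η - 1) (by linarith) ht0 ht1
  rw [show -(η-1) = 1 - η by ring] at hb1
  have hA : (0:ℝ) < a ^ (1-η) := rpow_pos_of_pos ha _
  have hmul := mul_le_mul_of_nonneg_left hb1 hA.le
  have hbt : a ^ (1-η) * t ^ (1-η) = b ^ (1-η) := by
    rw [← mul_rpow ha.le ht0.le, ht_def, mul_div_cancel₀ _ ha.ne']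
  have haη : a ^ (1-η) * a ^ η = a := by
    rw [← rpow_add ha]; norm_num
  have hane : (a:ℝ)^η ≠ 0 := (rpow_pos_of_pos ha η).ne'
  have key : a ^ (1-η) * (1 + (η-1)*(1-t)) = a ^ (1-η) + (η - 1) * ((a - b) / a ^ η) := by
    rw [ht_def]
    field_simp
    ring_nf
    linear_combination (η-1) * (a-b) * haη
  linarith [hmul, hbt ▸ hmul, key ▸ hmul]

/-- Tail-nucleus formula: if `y_k − y_{k+1} ≍ y_k^η` with `η > 1`, then
`1 − ln(k(y_k − y_{k+1}) + y_k) / ln((y_k − y_{k+1})/2) → (η−1)/η`. -/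
theorem tail_nucleus_formula
    (ys : ℕ → ℝ) (η ρ : ℝ)
    (hpos : ∀ k, 0 < ys k) (hanti : StrictAnti ys)
    (hlim : Filter.Tendsto ys Filter.atTop (nhds 0))
    (hη : 1 < η) (hρ : 1 ≤ ρ)
    (hcomp : ∀ k : ℕ,
      (1/ρ) * ys k ^ η ≤ ys k - ys (k+1) ∧
      ys k - ys (k+1) ≤ ρ * ys k ^ η) :
    Filter.Tendsto
      (fun k : ℕ =>
        1 - Real.log ((k : ℝ) * (ys k - ys (k+1)) + ys k) /
              Real.log ((ys k - ys (k+1)) / 2))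
      Filter.atTop (nhds ((η - 1) / η)) := by
  have hη1 : (0:ℝ) < η - 1 := by linarith
  have hρ0 : (0:ℝ) < ρ := by linarith
  set c : ℝ := (η - 1) / ρ with hc_def
  have hc : 0 < c := div_pos hη1 hρ0
  have hd : ∀ k, 0 < ys k - ys (k+1) := fun k => sub_pos.2 (hanti (Nat.lt_succ_self k))
  have hstep : ∀ k, ys k ^ (1-η) + c ≤ ys (k+1) ^ (1-η) := by
    intro k
    have h1 := step_ineq hη (hpos (k+1)) (hanti (Nat.lt_succ_self k))
    have hyη : (0:ℝ) < ys k ^ η := rpow_pos_of_pos (hpos k) _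
    have h2 : (1:ℝ)/ρ ≤ (ys k - ys (k+1)) / ys k ^ η := by
      rw [le_div_iff₀ hyη]; exact (hcomp k).1
    have h3 : c ≤ (η - 1) * ((ys k - ys (k+1)) / ys k ^ η) := by
      have := mul_le_mul_of_nonneg_left h2 hη1.le
      rw [hc_def]; rw [div_eq_mul_one_div]; linarith
    linarith
  have hlin : ∀ k : ℕ, (k:ℝ) * c ≤ ys k ^ (1-η) := by
    intro k; induction k with
    | zero => simpa using (rpow_pos_of_pos (hpos 0) (1-η)).le
    | succ n ih =>
      have := hstep n
      push_cast; linarith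
  have hkd : ∀ k : ℕ, (k:ℝ) * (ys k - ys (k+1)) ≤ (ρ/c) * ys k := by
    intro k
    rcases Nat.eq_zero_or_pos k with rfl | hk
    · simp only [Nat.cast_zero, zero_mul]
      exact mul_nonneg (div_pos hρ0 hc).le (hpos 0).le
    · have hy := hpos k
      have hkc : (0:ℝ) < (k:ℝ) * c := by
        have : (0:ℝ) < (k:ℝ) := by exact_mod_cast hk
        positivity
      have hzpos : (0:ℝ) < ys k ^ (η-1) := rpow_pos_of_pos hy _
      have hinv : ys k ^ (η-1) ≤ ((k:ℝ) * c)⁻¹ := by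
        have heq : ys k ^ (1-η) = (ys k ^ (η-1))⁻¹ := by
          rw [show (1-η) = -(η-1) by ring, rpow_neg hy.le]
        have h1 : (k:ℝ) * c ≤ (ys k ^ (η-1))⁻¹ := heq ▸ hlin k
        calc ys k ^ (η-1) = ((ys k ^ (η-1))⁻¹)⁻¹ := by rw [inv_inv]
          _ ≤ ((k:ℝ) * c)⁻¹ := inv_anti₀ hkc h1
      have hsplit : ys k ^ η = ys k ^ (η-1) * ys k := by
        nth_rewrite 1 [show η = (η-1) + 1 by ring]
        rw [rpow_add hy, rpow_one]
      have hkne : (k:ℝ) ≠ 0 := by positivity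
      calc (k:ℝ) * (ys k - ys (k+1)) ≤ (k:ℝ) * (ρ * ys k ^ η) :=
            mul_le_mul_of_nonneg_left (by linarith [(hcomp k).2]) (Nat.cast_nonneg k)
        _ = ρ * ((k:ℝ) * ys k ^ (η-1)) * ys k := by rw [hsplit]; ring
        _ ≤ ρ * ((k:ℝ) * ((k:ℝ) * c)⁻¹) * ys k := by
            apply mul_le_mul_of_nonneg_right _ hy.le
            exact mul_le_mul_of_nonneg_left
              (mul_le_mul_of_nonneg_left hinv (Nat.cast_nonneg k)) hρ0.le
        _ = (ρ/c) * ys k := by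
            rw [mul_inv, div_eq_mul_inv]
            field_simp
  set C : ℝ := ρ/c + 1 with hC_def
  have hC1 : (1:ℝ) < C := by
    have : 0 < ρ/c := div_pos hρ0 hc
    rw [hC_def]; linarith
  set L : ℕ → ℝ := fun k => Real.log (ys k) with hL_def
  set N : ℕ → ℝ := fun k => (k:ℝ) * (ys k - ys (k+1)) + ys k with hN_def
  set A : ℕ → ℝ := fun k => Real.log (N k) - L k with hA_def
  set E : ℕ → ℝ := fun k => Real.log ((ys k - ys (k+1))/2) - η * L k with hE_def
  have hNpos : ∀ k, 0 < N k := by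
    intro k
    have h1 := mul_nonneg (Nat.cast_nonneg (α := ℝ) k) (hd k).le
    have h2 := hpos k
    simp only [hN_def]; linarith
  have hA_nonneg : ∀ k, 0 ≤ A k := by
    intro k
    have hle : ys k ≤ N k := by
      have h1 := mul_nonneg (Nat.cast_nonneg (α := ℝ) k) (hd k).le
      simp only [hN_def]; linarith
    simpa [hA_def, hL_def] using Real.log_le_log (hpos k) hle
  have hA_ub : ∀ k, A k ≤ Real.log C := by
    intro k
    have hle : N k ≤ C * ys k := by
      have := hkd k
      simp only [hN_def, hC_def]; nlinarith [hpos k]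
    have h := Real.log_le_log (hNpos k) hle
    rw [Real.log_mul (by linarith) (hpos k).ne'] at h
    simp only [hA_def, hL_def]; linarith
  have hlog_rpow : ∀ k, Real.log (ys k ^ η) = η * L k := fun k => Real.log_rpow (hpos k) η
  have h2ρ : (0:ℝ) < 2*ρ := by linarith
  have hE_bound : ∀ k, |E k| ≤ Real.log (2*ρ) := by
    intro k
    have hyη : (0:ℝ) < ys k ^ η := rpow_pos_of_pos (hpos k) _
    have hub : (ys k - ys (k+1))/2 ≤ ρ * ys k ^ η := by nlinarith [(hcomp k).2, hd k, hyη]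
    have hlb : (1/(2*ρ)) * ys k ^ η ≤ (ys k - ys (k+1))/2 := by
      have h0 := (hcomp k).1
      have h1 : (1/(2*ρ)) * ys k ^ η = ((1/ρ) * ys k ^ η)/2 := by
        rw [one_div, one_div, mul_inv]; ring
      linarith
    have h1 := Real.log_le_log (by linarith [hd k]) hub
    have h2 := Real.log_le_log (by positivity) hlb
    rw [Real.log_mul hρ0.ne' hyη.ne', hlog_rpow k] at h1
    rw [Real.log_mul (by positivity) hyη.ne', hlog_rpow k, Real.log_div one_ne_zero h2ρ.ne',
      Real.log_one] at h2
    have hρle : Real.log ρ ≤ Real.log (2*ρ) := Real.log_le_log hρ0 (by linarith)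
    rw [abs_le]
    constructor <;> simp only [hE_def] <;> linarith
  have hL_bot : Tendsto L atTop atBot := by
    have h1 : Tendsto ys atTop (nhdsWithin 0 (Set.Ioi 0)) :=
      tendsto_nhdsWithin_of_tendsto_nhds_of_eventually_within ys hlim
        (Eventually.of_forall fun k => hpos k)
    exact Real.tendsto_log_nhdsGT_zero.comp h1
  have hLinv : Tendsto (fun k => (L k)⁻¹) atTop (nhds 0) := by
    have h1 : Tendsto (fun k => -L k) atTop atTop := tendsto_neg_atBot_atTop.comp hL_bot
    have h2 := h1.inv_tendsto_atTop
    have h3 : Tendsto (fun k => -(-L k)⁻¹) atTop (nhds (-0)) := h2.neg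
    simp only [inv_neg, neg_neg, neg_zero] at h3
    exact h3
  have hA0 : Tendsto (fun k => A k * (L k)⁻¹) atTop (nhds 0) := by
    apply squeeze_zero_norm (a := fun k => Real.log C * ‖(L k)⁻¹‖)
    · intro k
      rw [norm_mul]
      apply mul_le_mul_of_nonneg_right _ (norm_nonneg _)
      rw [Real.norm_eq_abs, abs_of_nonneg (hA_nonneg k)]
      exact hA_ub k
    · simpa using hLinv.norm.const_mul (Real.log C)
  have hE0 : Tendsto (fun k => E k * (L k)⁻¹) atTop (nhds 0) := by
    apply squeeze_zero_norm (a := fun k => Real.log (2*ρ) * ‖(L k)⁻¹‖)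
    · intro k
      rw [norm_mul, Real.norm_eq_abs]
      exact mul_le_mul_of_nonneg_right (hE_bound k) (norm_nonneg _)
    · simpa using hLinv.norm.const_mul (Real.log (2*ρ))
  have hη0 : η ≠ 0 := by linarith
  have hquot : Tendsto (fun k => (1 + A k * (L k)⁻¹) / (η + E k * (L k)⁻¹)) atTop
      (nhds (1/η)) := by
    have h1 : Tendsto (fun k => 1 + A k * (L k)⁻¹) atTop (nhds 1) := by
      simpa using (tendsto_const_nhds (x := (1:ℝ)) (f := atTop (α := ℕ))).add hA0
    have h2 : Tendsto (fun k => η + E k * (L k)⁻¹) atTop (nhds η) := by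
      simpa using (tendsto_const_nhds (x := η) (f := atTop (α := ℕ))).add hE0
    exact h1.div h2 hη0
  have hfinal : Tendsto (fun k => 1 - (1 + A k * (L k)⁻¹) / (η + E k * (L k)⁻¹)) atTop
      (nhds ((η-1)/η)) := by
    have h := (tendsto_const_nhds (x := (1:ℝ)) (f := atTop (α := ℕ))).sub hquot
    have heq : (1:ℝ) - 1/η = (η-1)/η := by field_simp
    rwa [heq] at h
  apply hfinal.congr'
  have hLev : ∀ᶠ k in atTop, L k ≤ min (-1) ((-(Real.log (2*ρ)) - 1)/η) :=
    hL_bot.eventually_le_atBot _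
  filter_upwards [hLev] with k hk
  have hL_neg : L k < 0 := lt_of_le_of_lt (hk.trans (min_le_left _ _)) (by norm_num)
  have hLne : L k ≠ 0 := hL_neg.ne
  have hden : η * L k + E k < 0 := by
    have h1 : L k ≤ (-(Real.log (2*ρ)) - 1)/η := hk.trans (min_le_right _ _)
    have h2 : L k * η ≤ -(Real.log (2*ρ)) - 1 := (le_div_iff₀ (by linarith)).1 h1
    have h3 := (abs_le.1 (hE_bound k)).2
    nlinarith
  have hlogN : Real.log (N k) = L k + A k := by simp [hA_def]
  have hlogD : Real.log ((ys k - ys (k+1))/2) = η * L k + E k := by simp [hE_def]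
  have hne : η + E k * (L k)⁻¹ ≠ 0 := by
    intro h
    apply hden.ne
    have h2 : (η + E k * (L k)⁻¹) * L k = 0 := by rw [h]; ring
    calc η * L k + E k = (η + E k * (L k)⁻¹) * L k := by field_simp
      _ = 0 := h2
  have hratio : Real.log (N k) / Real.log ((ys k - ys (k+1))/2)
      = (1 + A k * (L k)⁻¹) / (η + E k * (L k)⁻¹) := by
    rw [hlogN, hlogD, div_eq_div_iff hden.ne hne]
    field_simp
  rw [hratio]
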